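/- Define ϑ(φ) = (7.6φ - 1.6)(5.4φ + 0.6)(9.2φ - 3.2) - (8.32φ - 2.22)(3.71φ + 2.39)(10.54φ - 4.44) for φ ∈ [4.44/10.54, 1]. Then ϑ has exactly one zero φ₀ in this interval; moreover ϑ(φ) > 0 for φ ∈ [4.44/10.54, φ₀) and ϑ(φ) < 0 for φ ∈ (φ₀, 1]. -/
import Mathlib


/-- The cubic stability indicator `ϑ(φ)` has exactly one zero `φ₀` in
`[4.44/10.54, 1]`; it is positive before `φ₀` and negative after. -/
theorem stmt_8
    (ϑ : ℝ → ℝ)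
    (hϑ : ∀ φ, ϑ φ = (7.6 * φ - 1.6) * (5.4 * φ + 0.6) * (9.2 * φ - 3.2)
        - (8.32 * φ - 2.22) * (3.71 * φ + 2.39) * (10.54 * φ - 4.44)) :
    ∃! φ₀, φ₀ ∈ Set.Icc (4.44 / 10.54 : ℝ) 1 ∧ ϑ φ₀ = 0 ∧
      (∀ φ ∈ Set.Icc (4.44 / 10.54 : ℝ) 1, φ < φ₀ → 0 < ϑ φ) ∧
      (∀ φ ∈ Set.Icc (4.44 / 10.54 : ℝ) 1, φ₀ < φ → ϑ φ < 0) := by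
  have hϑ' : ϑ = fun x : ℝ => 816058/15625*x^3 - 38647469/250000*x^2
      + 27966729/250000*x - 2560719/125000 := by
    funext x; rw [hϑ]; ring
  have ha : (4.44/10.54 : ℝ) ≤ 0.48 := by norm_num
  have hcont : Continuous ϑ := by rw [hϑ']; continuity
  have hder : ∀ x : ℝ, HasDerivAt ϑ
      (2448174/15625*x^2 - 38647469/125000*x + 27966729/250000) x := by
    intro x
    rw [hϑ']
    have h1 : HasDerivAt (fun x : ℝ => 816058/15625*x^3 - 38647469/250000*x^2
        + 27966729/250000*x - 2560719/125000)
        ((816058/15625*(3*x^2) - 38647469/250000*(2*x) + 27966729/250000*1) - 0) x := by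
      exact ((((hasDerivAt_pow 3 x).const_mul (816058/15625:ℝ)).sub
        ((hasDerivAt_pow 2 x).const_mul (38647469/250000:ℝ))).add
        ((hasDerivAt_id x).const_mul (27966729/250000:ℝ))).sub (hasDerivAt_const x _)
      |>.congr_deriv (by push_cast; ring)
    exact h1.congr_deriv (by ring)
  have hanti : StrictAntiOn ϑ (Set.Icc (0.48:ℝ) 1) := by
    apply strictAntiOn_of_deriv_neg (convex_Icc _ _) hcont.continuousOn
    intro x hx
    rw [interior_Icc] at hx
    rw [(hder x).deriv]
    nlinarith [mul_nonneg (le_of_lt (sub_pos.2 hx.1)) (le_of_lt (sub_pos.2 hx.2)),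
      sq_nonneg x]
  have h48 : (0:ℝ) < ϑ 0.48 := by rw [hϑ]; norm_num
  have h1 : ϑ 1 < 0 := by rw [hϑ]; norm_num
  have hiv : (0:ℝ) ∈ ϑ '' Set.Icc 0.48 1 := by
    apply intermediate_value_Icc' (by norm_num) hcont.continuousOn
    exact ⟨le_of_lt h1, le_of_lt h48⟩
  obtain ⟨φ₀, hφ₀mem, hφ₀zero⟩ := hiv
  have hφ₀a : φ₀ ∈ Set.Icc (4.44/10.54 : ℝ) 1 := ⟨le_trans ha hφ₀mem.1, hφ₀mem.2⟩
  have hpos : ∀ φ ∈ Set.Icc (4.44/10.54 : ℝ) 1, φ < φ₀ → 0 < ϑ φ := by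
    intro φ hφ hlt
    rcases lt_or_ge φ 0.48 with h | h
    · rw [hϑ]
      have h1 : (4.44/10.54 : ℝ) ≤ φ := hφ.1
      nlinarith [mul_nonneg (sub_nonneg.2 h1) (le_of_lt (sub_pos.2 h)),
        sq_nonneg (φ - 0.45), sq_nonneg φ]
    · have := hanti ⟨h, hφ.2⟩ hφ₀mem hlt
      rw [hφ₀zero] at this; exact this
  have hneg : ∀ φ ∈ Set.Icc (4.44/10.54 : ℝ) 1, φ₀ < φ → ϑ φ < 0 := by
    intro φ hφ hlt
    have := hanti hφ₀mem ⟨le_trans hφ₀mem.1 (le_of_lt hlt), hφ.2⟩ hlt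
    rw [hφ₀zero] at this; exact this
  refine ⟨φ₀, ⟨hφ₀a, hφ₀zero, hpos, hneg⟩, ?_⟩
  rintro y ⟨hymem, hyzero, -, -⟩
  rcases lt_trichotomy y φ₀ with h | h | h
  · exact absurd hyzero (ne_of_gt (hpos y hymem h))
  · exact h
  · exact absurd hyzero (ne_of_lt (hneg y hymem h))
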